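/- arXiv:2305.12568 — 2 statements merged into one kernel-verified Lean document; each statement's English description precedes it below -/
import Mathlib

section
/- For any matrix L in the symmetric positive definite d×d matrices, the inequality λ_max(L·diag(L⁻¹)) ≥ det(L⁻¹·diag(L))^(1/d) holds, where diag(A) denotes the diagonal matrix with the same diagonal as A. -/
open Matrix

lemma aux_trace_eq_sum_eigenvalues {n : Type*} [Fintype n] [DecidableEq n]
    {A : Matrix n n ℝ} (hA : A.IsHermitian) :
    A.trace = ∑ i, hA.eigenvalues i := by
  have h : (star (hA.eigenvectorUnitary : Matrix n n ℝ)) * A *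
      (hA.eigenvectorUnitary : Matrix n n ℝ) = diagonal (RCLike.ofReal ∘ hA.eigenvalues) := by
    have h1 : (star (hA.eigenvectorUnitary : Matrix n n ℝ)) *
        (hA.eigenvectorUnitary : Matrix n n ℝ) = 1 :=
      (Matrix.mem_unitaryGroup_iff').mp (hA.eigenvectorUnitary).2
    refine (congrArg (fun X => (star (hA.eigenvectorUnitary : Matrix n n ℝ)) * X *
      (hA.eigenvectorUnitary : Matrix n n ℝ)) hA.spectral_theorem).trans ?_
    simp only [Unitary.conjStarAlgAut_apply, mul_assoc]
    rw [h1, mul_one, ← mul_assoc, h1, one_mul]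
  have hU : (hA.eigenvectorUnitary : Matrix n n ℝ) *
      (star (hA.eigenvectorUnitary : Matrix n n ℝ)) = 1 :=
    (Matrix.mem_unitaryGroup_iff).mp (hA.eigenvectorUnitary).2
  calc A.trace = ((star (hA.eigenvectorUnitary : Matrix n n ℝ)) * A *
        (hA.eigenvectorUnitary : Matrix n n ℝ)).trace := by
        rw [trace_mul_cycle, hU, one_mul]
    _ = (diagonal (RCLike.ofReal ∘ hA.eigenvalues) : Matrix n n ℝ).trace := by rw [h]
    _ = ∑ i, hA.eigenvalues i := by simp [trace_diagonal]

lemma aux_posdef_diag_pos {n : Type*} [Fintype n] [DecidableEq n]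
    {A : Matrix n n ℝ} (hA : A.PosDef) (i : n) : 0 < A i i := by
  have hne : (Pi.single i 1 : n → ℝ) ≠ 0 := by
    intro h
    simpa using congrFun h i
  have := hA.dotProduct_mulVec_pos hne
  simpa [single_dotProduct, mulVec_single] using this

theorem stmt_0 (d : ℕ) (hd : 0 < d) (L : Matrix (Fin d) (Fin d) ℝ) (hL : L.PosDef) :
    (L⁻¹ * Matrix.diagonal L.diag).det ^ ((1 : ℝ) / d) ≤
      sSup (spectrum ℝ (L * Matrix.diagonal (L⁻¹).diag)) := by
  have hd' : (0 : ℝ) < d := by exact_mod_cast hd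
  have hLinv : (L⁻¹).PosDef := hL.inv
  set c : Fin d → ℝ := (L⁻¹).diag with hc
  have hcpos : ∀ i, 0 < c i := fun i => aux_posdef_diag_pos hLinv i
  have hdiagpos : ∀ i, 0 < L i i := fun i => aux_posdef_diag_pos hL i
  set e : Fin d → ℝ := fun i => Real.sqrt (c i) with hedef
  have he : ∀ i, 0 < e i := fun i => Real.sqrt_pos.mpr (hcpos i)
  have hee : diagonal e * diagonal e = diagonal c := by
    rw [diagonal_mul_diagonal]
    exact congrArg diagonal (funext fun i => Real.mul_self_sqrt (hcpos i).le)
  have hinv : diagonal e * diagonal (fun i => (e i)⁻¹) = 1 := by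
    rw [diagonal_mul_diagonal, ← diagonal_one]
    exact congrArg diagonal (funext fun i => mul_inv_cancel₀ (he i).ne')
  have hinv' : diagonal (fun i => (e i)⁻¹) * diagonal e = 1 := by
    rw [diagonal_mul_diagonal, ← diagonal_one]
    exact congrArg diagonal (funext fun i => inv_mul_cancel₀ (he i).ne')
  set u : (Matrix (Fin d) (Fin d) ℝ)ˣ :=
    ⟨diagonal e, diagonal (fun i => (e i)⁻¹), hinv, hinv'⟩ with hu
  set S : Matrix (Fin d) (Fin d) ℝ := diagonal e * L * diagonal e with hS
  have hspec : spectrum ℝ (L * diagonal c) = spectrum ℝ S := by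
    have hMeq : (↑u⁻¹ : Matrix (Fin d) (Fin d) ℝ) * S * (↑u : Matrix (Fin d) (Fin d) ℝ) = L * diagonal c := by
      show diagonal (fun i => (e i)⁻¹) * (diagonal e * L * diagonal e) * diagonal e = _
      calc diagonal (fun i => (e i)⁻¹) * (diagonal e * L * diagonal e) * diagonal e
          = (diagonal (fun i => (e i)⁻¹) * diagonal e) * L * (diagonal e * diagonal e) := by
            simp only [mul_assoc]
        _ = L * diagonal c := by rw [hinv', hee, one_mul]
    rw [← hMeq, spectrum.units_conjugate']
  have hSh : S.IsHermitian := by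
    have hdce : (diagonal e)ᴴ = diagonal e := by
      rw [diagonal_conjTranspose]
      congr 1
    show Sᴴ = S
    rw [hS, conjTranspose_mul, conjTranspose_mul, hdce, hL.1.eq, mul_assoc]
  -- the matrix W
  set f : Fin d → ℝ := fun i => Real.sqrt (L i i) with hf
  set W : Matrix (Fin d) (Fin d) ℝ := diagonal f * L⁻¹ * diagonal f with hW
  have hWps : W.PosSemidef := by
    have hdcf : (diagonal f)ᴴ = diagonal f := by
      rw [diagonal_conjTranspose]
      congr 1
    have := (hLinv.posSemidef).mul_mul_conjTranspose_same (diagonal f)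
    rwa [hdcf] at this
  have hWh : W.IsHermitian := hWps.1
  -- determinant equality
  have hdet : (L⁻¹ * diagonal L.diag).det = W.det := by
    rw [hW, det_mul, det_mul, det_mul, det_diagonal, det_diagonal]
    rw [show (∏ i, f i) * L⁻¹.det * ∏ i, f i = L⁻¹.det * ((∏ i, f i) * (∏ i, f i)) from by ring,
      ← Finset.prod_mul_distrib]
    congr 1
    apply Finset.prod_congr rfl
    intro i _
    exact (Real.mul_self_sqrt (hdiagpos i).le).symm
  -- trace equality
  have htr : W.trace = S.trace := by
    rw [hW, hS]
    simp only [Matrix.trace, Matrix.diag_apply, Matrix.mul_diagonal, Matrix.diagonal_mul]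
    apply Finset.sum_congr rfl
    intro i _
    have h1 : f i * f i = L i i := Real.mul_self_sqrt (hdiagpos i).le
    have h2 : e i * e i = L⁻¹ i i := Real.mul_self_sqrt (hcpos i).le
    have hci : c i = L⁻¹ i i := rfl
    linear_combination (L⁻¹ i i) * h1 - (L i i) * h2
  -- eigenvalue bounds
  have hub : ∀ i, hSh.eigenvalues i ≤ sSup (spectrum ℝ (L * diagonal c)) := by
    intro i
    rw [hspec]
    exact le_csSup (S.finite_spectrum.bddAbove) (hSh.eigenvalues_mem_spectrum_real i)
  set Λ : ℝ := sSup (spectrum ℝ (L * diagonal c)) with hΛ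
  have hsum : S.trace ≤ d * Λ := by
    rw [aux_trace_eq_sum_eigenvalues hSh]
    calc ∑ i, hSh.eigenvalues i ≤ ∑ _i : Fin d, Λ :=
          Finset.sum_le_sum fun i _ => hub i
      _ = d * Λ := by simp [Finset.sum_const, nsmul_eq_mul]
  -- AM-GM for W's eigenvalues
  have hdetW : W.det = ∏ i, hWh.eigenvalues i := by
    have := hWh.det_eq_prod_eigenvalues
    simpa using this
  have hAM : (∏ i, hWh.eigenvalues i) ^ ((1 : ℝ) / d) ≤
      ∑ i, (1 / (d : ℝ)) * hWh.eigenvalues i := by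
    have hnn : ∀ i ∈ Finset.univ, (0:ℝ) ≤ hWh.eigenvalues i :=
      fun i _ => hWps.eigenvalues_nonneg i
    have h := Real.geom_mean_le_arith_mean_weighted Finset.univ
      (fun _ => 1 / (d : ℝ)) hWh.eigenvalues
      (fun _ _ => by positivity)
      (by
        simp only [Finset.sum_const, Finset.card_univ, Fintype.card_fin, nsmul_eq_mul]
        field_simp)
      hnn
    calc (∏ i, hWh.eigenvalues i) ^ ((1 : ℝ) / d)
        = ∏ i, hWh.eigenvalues i ^ ((1 : ℝ) / d) :=
          (Real.finset_prod_rpow Finset.univ _ hnn _).symm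
      _ ≤ ∑ i, (1 / (d : ℝ)) * hWh.eigenvalues i := h
  have htrW : ∑ i, (1 / (d : ℝ)) * hWh.eigenvalues i = W.trace / d := by
    rw [aux_trace_eq_sum_eigenvalues hWh, ← Finset.mul_sum]
    ring
  calc (L⁻¹ * diagonal L.diag).det ^ ((1 : ℝ) / d)
      = (∏ i, hWh.eigenvalues i) ^ ((1 : ℝ) / d) := by rw [hdet, hdetW]
    _ ≤ ∑ i, (1 / (d : ℝ)) * hWh.eigenvalues i := hAM
    _ = W.trace / d := htrW
    _ = S.trace / d := by rw [htr]
    _ ≤ (d * Λ) / d := by gcongr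
    _ = Λ := by field_simp
end

section
/- Let f : ℝ^d → ℝ be L-matrix-smooth with f bounded below by f^inf, let D ∈ S^d_{++} satisfy DLD ⪯ D, and let x^{k+1} = x^k − D∇f(x^k) for k = 0,…,K−1. Then (1/K)∑_{k=0}^{K−1} ‖∇f(x^k)‖²_D ≤ 2(f(x^0) − f^inf)/K. -/
open Matrix
open scoped RealInnerProductSpace

lemma inner_toEuclideanLin_eq (d : ℕ) (M : Matrix (Fin d) (Fin d) ℝ)
    (v w : EuclideanSpace ℝ (Fin d)) :
    ⟪Matrix.toEuclideanLin M v, w⟫ =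
      (M *ᵥ (WithLp.equiv 2 _ v)) ⬝ᵥ (WithLp.equiv 2 _ w) := by
  simp [EuclideanSpace.inner_eq_star_dotProduct, toEuclideanLin_apply, dotProduct, mul_comm]

lemma dot_sym (d : ℕ) (L D : Matrix (Fin d) (Fin d) ℝ) (hL : L.IsHermitian) (hD : D.IsHermitian)
    (u : Fin d → ℝ) : (L *ᵥ (D *ᵥ u)) ⬝ᵥ (D *ᵥ u) = u ⬝ᵥ ((D*L*D) *ᵥ u) := by
  have hDt : Dᵀ = D := by rw [← Matrix.conjTranspose_eq_transpose_of_trivial]; exact hD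
  have hLt : Lᵀ = L := by rw [← Matrix.conjTranspose_eq_transpose_of_trivial]; exact hL
  rw [mulVec_mulVec, dotProduct_mulVec, dotProduct_mulVec,
    ← mulVec_transpose D, ← mulVec_transpose (D*L*D), hDt, mulVec_mulVec,
    transpose_mul, transpose_mul, hDt, hLt, ← Matrix.mul_assoc]

theorem stmt_14 (d : ℕ) (L D : Matrix (Fin d) (Fin d) ℝ) (hL : L.PosDef) (hD : D.PosDef)
    (hDLD : (D - D * L * D).PosSemidef)
    (f : EuclideanSpace ℝ (Fin d) → ℝ) (g : EuclideanSpace ℝ (Fin d) → EuclideanSpace ℝ (Fin d))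
    (hg : ∀ x, HasGradientAt f (g x) x)
    (hsmooth : ∀ x y, f x ≤ f y + ⟪g y, x - y⟫ +
      (1 / 2) * ⟪Matrix.toEuclideanLin L (x - y), x - y⟫)
    (finf : ℝ) (hbdd : ∀ x, finf ≤ f x)
    (K : ℕ) (x : ℕ → EuclideanSpace ℝ (Fin d))
    (hx : ∀ k, x (k + 1) = x k - Matrix.toEuclideanLin D (g (x k))) :
    (1 / K : ℝ) * ∑ k ∈ Finset.range K, ⟪g (x k), Matrix.toEuclideanLin D (g (x k))⟫ ≤
      2 * (f (x 0) - finf) / K := by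
  have key : ∀ k, ⟪g (x k), Matrix.toEuclideanLin D (g (x k))⟫ ≤
      2 * (f (x k) - f (x (k + 1))) := by
    intro k
    set u := g (x k) with hu
    set v := Matrix.toEuclideanLin D u with hv
    have hs := hsmooth (x (k + 1)) (x k)
    rw [hx k, sub_sub_cancel_left, map_neg, inner_neg_neg, inner_neg_right] at hs
    rw [hx k]
    simp only [← hu, ← hv] at hs
    set u' : Fin d → ℝ := WithLp.equiv 2 _ u with hu'
    have hveq : (WithLp.equiv 2 (Fin d → ℝ)) v = D *ᵥ u' := by
      rw [hv]; exact ofLp_toEuclideanLin_apply D u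
    have hLvv : ⟪Matrix.toEuclideanLin L v, v⟫ = u' ⬝ᵥ ((D * L * D) *ᵥ u') := by
      rw [inner_toEuclideanLin_eq, hveq, dot_sym d L D hL.1 hD.1]
    have huv : ⟪u, v⟫ = u' ⬝ᵥ (D *ᵥ u') := by
      rw [real_inner_comm, inner_toEuclideanLin_eq]
      rw [dotProduct_comm]
    have hpsd := hDLD.dotProduct_mulVec_nonneg u'
    simp only [star_trivial, sub_mulVec, dotProduct_sub] at hpsd
    have h2 : ⟪Matrix.toEuclideanLin L v, v⟫ ≤ ⟪u, v⟫ := by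
      rw [hLvv, huv]; linarith
    linarith
  have hsum : ∑ k ∈ Finset.range K, ⟪g (x k), Matrix.toEuclideanLin D (g (x k))⟫ ≤
      2 * (f (x 0) - finf) := by
    calc ∑ k ∈ Finset.range K, ⟪g (x k), Matrix.toEuclideanLin D (g (x k))⟫
        ≤ ∑ k ∈ Finset.range K, 2 * (f (x k) - f (x (k + 1))) :=
          Finset.sum_le_sum fun k _ => key k
      _ = 2 * (f (x 0) - f (x K)) := by
          rw [← Finset.mul_sum, Finset.sum_range_sub' (fun k => f (x k))]
      _ ≤ 2 * (f (x 0) - finf) := by have := hbdd (x K); linarith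
  obtain rfl | hK := Nat.eq_zero_or_pos K
  · simp
  · have hKpos : (0 : ℝ) < K := by exact_mod_cast hK
    rw [one_div, inv_mul_eq_div]
    exact div_le_div_of_nonneg_right hsum hKpos.le
end
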